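/- The scheme X obtained by gluing two copies of affine 3-space A^3 along the loci {a ≠ 0} and {b ≠ 0} via the map (a, v2, v1) |-> (a^{-1}, a^{-1} v2, a^3 v1 + Σ λ_{jk} a^{2-k} v2^{j+k-1}) is separated; equivalently, the ring map K[a, v2, v1] ⊗_K K[b, w2, w1] -> K[b, b^{-1}, w2, w1] determined by a ⊗ 1 |-> b^{-1}, v2 ⊗ 1 |-> b^{-1} w2 (via the inverse glue), and b,w2,w1 mapping to themselves, with a⊗b |-> (glue of a)·b, is surjective. -/

import Mathlib

noncomputable section

open MvPolynomial

/-- The coordinate ring `K[b^{±1}, w₂, w₁]` of the overlap `U₁ ∩ U₂`. -/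
abbrev Rng (K : Type*) [Field K] := MvPolynomial (Fin 2) (LaurentPolynomial K)

variable (K : Type*) [Field K]

/-- Image of `b`. -/
def bImg : Rng K := MvPolynomial.C (LaurentPolynomial.T 1)

/-- Image of `a = b⁻¹`. -/
def aImg : Rng K := MvPolynomial.C (LaurentPolynomial.T (-1))

/-- The map `K[b, w₂, w₁] → K[b^{±1}, w₂, w₁]`, with `b, w₂, w₁` mapping to themselves. -/
def phi2 : MvPolynomial (Fin 3) K →ₐ[K] Rng K :=
  aeval ![bImg K, X 0, X 1]

/-- The map `K[a, v₂, v₁] → K[b^{±1}, w₂, w₁]` determined by the glue: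
`a ↦ b⁻¹`, `v₂ ↦ b⁻¹ w₂`, and (via the inverse glue)
`v₁ ↦ b³w₁ - Σ λ_{jk} b^{2-j} w₂^{j+k-1}`. -/
def phi1 (S : Finset (ℕ × ℕ)) (lam : ℕ × ℕ → K) : MvPolynomial (Fin 3) K →ₐ[K] Rng K :=
  aeval ![aImg K, aImg K * X 0,
    MvPolynomial.C (LaurentPolynomial.T 3) * X 1 -
      ∑ p ∈ S, lam p •
        (MvPolynomial.C (LaurentPolynomial.T (2 - (p.1 : ℤ))) * X 0 ^ (p.1 + p.2 - 1))]

open scoped TensorProduct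

/-- The ring map `K[a,v₂,v₁] ⊗_K K[b,w₂,w₁] → K[b^{±1}, w₂, w₁]` determined by the glue
is surjective (so the glued scheme `X` is separated). -/
theorem stmt6 (S : Finset (ℕ × ℕ)) (lam : ℕ × ℕ → K)
    (hlam : ∀ p : ℕ × ℕ, p.1 + p.2 ≤ 1 → lam p = 0) :
    Function.Surjective
      (Algebra.TensorProduct.lift (phi1 K S lam) (phi2 K) (fun a b => mul_comm _ _) :
        MvPolynomial (Fin 3) K ⊗[K] MvPolynomial (Fin 3) K →ₐ[K] Rng K) := by
  set f := (Algebra.TensorProduct.lift (phi1 K S lam) (phi2 K) (fun a b => mul_comm _ _) :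
        MvPolynomial (Fin 3) K ⊗[K] MvPolynomial (Fin 3) K →ₐ[K] Rng K)
  rw [← AlgHom.range_eq_top, ← top_le_iff]
  have ha : aImg K ∈ f.range := ⟨(X 0) ⊗ₜ 1, by simp [f, phi1]⟩
  have hb : bImg K ∈ f.range := ⟨1 ⊗ₜ (X 0), by simp [f, phi2]⟩
  have h0 : (X 0 : Rng K) ∈ f.range := ⟨1 ⊗ₜ (X 1), by simp [f, phi2]⟩
  have h1 : (X 1 : Rng K) ∈ f.range := ⟨1 ⊗ₜ (X 2), by simp [f, phi2]⟩
  have hT : ∀ n : ℤ, (MvPolynomial.C (LaurentPolynomial.T n) : Rng K) ∈ f.range := by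
    intro n
    have : (MvPolynomial.C (LaurentPolynomial.T n) : Rng K)
        = (bImg K) ^ n.toNat * (aImg K) ^ (-n).toNat := by
      rw [bImg, aImg, ← map_pow, ← map_pow, ← map_mul, LaurentPolynomial.T_pow,
        LaurentPolynomial.T_pow, ← LaurentPolynomial.T_add]
      norm_num
      congr 1
      omega
    rw [this]
    exact mul_mem (pow_mem hb _) (pow_mem ha _)
  have hC : ∀ l : LaurentPolynomial K, (MvPolynomial.C l : Rng K) ∈ f.range := by
    intro l
    induction l using LaurentPolynomial.induction_on' with
    | add p q hp hq => rw [map_add]; exact add_mem hp hq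
    | C_mul_T n a =>
      rw [map_mul]
      refine mul_mem ?_ (hT n)
      have : (MvPolynomial.C (LaurentPolynomial.C a) : Rng K) = algebraMap K (Rng K) a := rfl
      rw [this]
      exact Subalgebra.algebraMap_mem _ _
  rintro p -
  induction p using MvPolynomial.induction_on with
  | C l => exact hC l
  | add p q hp hq => exact add_mem hp hq
  | mul_X p i hp =>
    refine mul_mem hp ?_
    fin_cases i
    · exact h0
    · exact h1
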